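/- Coalescing can be redundantly pushed into pointwise addition: for all temporal K-elements k and k', coal(k +_P k') = coal(coal(k) +_P k'). -/
import Mathlib


open scoped Classical

namespace TemporalK

variable {K : Type*}

/-- An interval over the time domain `{0, ..., N-1}`: a pair `(b, e)` with `b < e ≤ N`. -/
abbrev TInterval (N : ℕ) := {I : Fin (N + 1) × Fin (N + 1) // I.1 < I.2}

/-- A temporal `K`-element: a function assigning to each interval an element of `K`. -/
abbrev TempEl (N : ℕ) (K : Type*) := TInterval N → K

/-- The interval `I = (b, e)` contains the time point `T` iff `b ≤ T < e`. -/
def Contains {N : ℕ} (I : TInterval N) (T : ℕ) : Prop :=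
  (I.val.1 : ℕ) ≤ T ∧ T < (I.val.2 : ℕ)

/-- The timeslice of `𝒯` at time point `T`: the sum of `𝒯 I` over all intervals `I`
containing `T`. -/
noncomputable def slice {N : ℕ} [CommSemiring K] (𝒯 : TempEl N K) (T : ℕ) : K :=
  ∑ I ∈ Finset.univ.filter (fun I : TInterval N => Contains I T), 𝒯 I

/-- `T` is an (annotation) changepoint of `𝒯` iff `T = 0` or the timeslices at `T - 1`
and `T` differ. -/
def Changepoint {N : ℕ} [CommSemiring K] (𝒯 : TempEl N K) (T : ℕ) : Prop :=
  T = 0 ∨ slice 𝒯 (T - 1) ≠ slice 𝒯 T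

/-- `I = (b, e)` is a changepoint interval of `𝒯` iff `b` is a changepoint, `e` is a
changepoint or equals `N`, and no time point strictly between `b` and `e` is a changepoint. -/
def CPInterval {N : ℕ} [CommSemiring K] (𝒯 : TempEl N K) (I : TInterval N) : Prop :=
  Changepoint 𝒯 (I.val.1 : ℕ) ∧
    (Changepoint 𝒯 (I.val.2 : ℕ) ∨ (I.val.2 : ℕ) = N) ∧
    ∀ T : ℕ, (I.val.1 : ℕ) < T → T < (I.val.2 : ℕ) → ¬ Changepoint 𝒯 T

/-- `K`-coalescing: maps changepoint intervals `(b, e)` to the timeslice at `b` and all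
other intervals to `0`. -/
noncomputable def coal {N : ℕ} [CommSemiring K] (𝒯 : TempEl N K) : TempEl N K :=
  fun I => if CPInterval 𝒯 I then slice 𝒯 (I.val.1 : ℕ) else 0

/-- Snapshot equivalence: equal timeslices at every time point. -/
def SnapEq {N : ℕ} [CommSemiring K] (k k' : TempEl N K) : Prop :=
  ∀ T : ℕ, T < N → slice k T = slice k' T

/-- A temporal `K`-element is coalesced iff it is the `K`-coalescing of some
temporal `K`-element. -/
def Coalesced {N : ℕ} [CommSemiring K] (k : TempEl N K) : Prop :=
  ∃ 𝒯 : TempEl N K, k = coal 𝒯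

/-- Pointwise addition of temporal `K`-elements. -/
def padd {N : ℕ} [CommSemiring K] (k k' : TempEl N K) : TempEl N K :=
  fun I => k I + k' I

/-- Pointwise multiplication of temporal `K`-elements:
`(k ·_P k')(I) = Σ k(I')·k'(I'')` over all pairs `(I', I'')` whose intersection is
nonempty and equals `I`. -/
noncomputable def pmul {N : ℕ} [CommSemiring K] (k k' : TempEl N K) : TempEl N K :=
  fun I =>
    ∑ p ∈ Finset.univ.filter (fun p : TInterval N × TInterval N =>
        max (p.1.val.1 : ℕ) (p.2.val.1 : ℕ) < min (p.1.val.2 : ℕ) (p.2.val.2 : ℕ) ∧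
        (I.val.1 : ℕ) = max (p.1.val.1 : ℕ) (p.2.val.1 : ℕ) ∧
        (I.val.2 : ℕ) = min (p.1.val.2 : ℕ) (p.2.val.2 : ℕ)),
      k p.1 * k' p.2

/-- Addition of the period semiring: coalesced pointwise addition. -/
noncomputable def tadd {N : ℕ} [CommSemiring K] (k k' : TempEl N K) : TempEl N K :=
  coal (padd k k')

/-- Multiplication of the period semiring: coalesced pointwise multiplication. -/
noncomputable def tmul {N : ℕ} [CommSemiring K] (k k' : TempEl N K) : TempEl N K :=
  coal (pmul k k')

/-- The zero of the period semiring: maps every interval to `0`. -/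
def zeroT (N : ℕ) (K : Type*) [CommSemiring K] : TempEl N K := fun _ => 0

/-- The one of the period semiring: maps the interval `(0, N)` to `1` and every other
interval to `0`. -/
def oneT (N : ℕ) (K : Type*) [CommSemiring K] : TempEl N K :=
  fun I => if (I.val.1 : ℕ) = 0 ∧ (I.val.2 : ℕ) = N then 1 else 0

/-- Encoding of an annotation history `f : time points → K` as a coalesced temporal
`K`-element: coalesce the element assigning `f T` to each singleton interval `(T, T+1)`. -/
noncomputable def enc {N : ℕ} [CommSemiring K] (f : Fin N → K) : TempEl N K :=
  coal (fun I =>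
    if h : (I.val.2 : ℕ) = (I.val.1 : ℕ) + 1 then
      f ⟨(I.val.1 : ℕ), by have := I.val.2.isLt; omega⟩
    else 0)

/-- The natural preorder of the semiring `K`. -/
def nle [CommSemiring K] (a b : K) : Prop := ∃ c, a + c = b

/-- The natural preorder of the period semiring (on coalesced temporal `K`-elements). -/
def tle {N : ℕ} [CommSemiring K] (k k' : TempEl N K) : Prop :=
  ∃ k'' : TempEl N K, Coalesced k'' ∧ tadd k k'' = k'

/-- The pointwise monus: assigns `τ_T(k) −_K τ_T(k')` to each singleton interval
`(T, T+1)` and `0` to every non-singleton interval. -/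
noncomputable def pmonus {N : ℕ} [CommSemiring K] (monus : K → K → K)
    (k k' : TempEl N K) : TempEl N K :=
  fun I =>
    if (I.val.2 : ℕ) = (I.val.1 : ℕ) + 1 then
      monus (slice k (I.val.1 : ℕ)) (slice k' (I.val.1 : ℕ))
    else 0

/-- The monus of the period semiring: coalesced pointwise monus. -/
noncomputable def tmonus {N : ℕ} [CommSemiring K] (monus : K → K → K)
    (k k' : TempEl N K) : TempEl N K :=
  coal (pmonus monus k k')

end TemporalK

open TemporalK

namespace TemporalK
section Aux

variable {N : ℕ} {K : Type*} [CommSemiring K]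

lemma slice_padd (k k' : TempEl N K) (T : ℕ) :
    slice (padd k k') T = slice k T + slice k' T := by
  unfold slice padd
  rw [Finset.sum_add_distrib]

lemma slice_const (k : TempEl N K) {b T : ℕ} (hbT : b ≤ T)
    (h : ∀ m, b < m → m ≤ T → ¬ Changepoint k m) :
    slice k b = slice k T := by
  induction T, hbT using Nat.le_induction with
  | base => rfl
  | succ T hT ih =>
    have h1 : ¬ Changepoint k (T + 1) := h (T + 1) (by omega) le_rfl
    rw [ih (fun m hm hm' => h m hm (by omega))]
    unfold Changepoint at h1
    push_neg at h1
    simpa using h1.2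

lemma exists_unique_cp (k : TempEl N K) {T : ℕ} (hT : T < N) :
    ∃! I : TInterval N, Contains I T ∧ CPInterval k I := by
  set b := Nat.findGreatest (fun m => Changepoint k m) T with hb
  have hb_le : b ≤ T := Nat.findGreatest_le T
  have hb_cp : Changepoint k b :=
    Nat.findGreatest_spec (Nat.zero_le T) (Or.inl rfl)
  have hex : ∃ m, T < m ∧ (Changepoint k m ∨ m = N) := ⟨N, hT, Or.inr rfl⟩
  set e := Nat.find hex with he
  have he_spec : T < e ∧ (Changepoint k e ∨ e = N) := Nat.find_spec hex
  have he_le : e ≤ N := Nat.find_min' hex ⟨hT, Or.inr rfl⟩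
  have hbe : b < e := lt_of_le_of_lt hb_le he_spec.1
  refine ⟨⟨(⟨b, by omega⟩, ⟨e, by omega⟩), by simpa using hbe⟩, ⟨⟨hb_le, he_spec.1⟩, ?_⟩, ?_⟩
  · refine ⟨hb_cp, he_spec.2, fun m h1 h2 => ?_⟩
    simp only at h1 h2
    by_cases hm : m ≤ T
    · exact Nat.findGreatest_is_greatest h1 hm
    · intro hcp
      exact Nat.find_min hex h2 ⟨by omega, Or.inl hcp⟩
  · rintro ⟨⟨b', e'⟩, hlt⟩ ⟨⟨hc1, hc2⟩, hcp1, hcp2, hcp3⟩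
    simp only at hc1 hc2 hcp1 hcp2 hcp3 hlt
    have hb' : (b' : ℕ) = b := by
      have h1 : (b' : ℕ) ≤ b := Nat.le_findGreatest hc1 hcp1
      by_contra hne
      exact hcp3 b (by omega) (by omega) hb_cp
    have he' : (e' : ℕ) = e := by
      have h1 : e ≤ (e' : ℕ) := Nat.find_min' hex ⟨hc2, hcp2⟩
      by_contra hne
      rcases he_spec.2 with hcp | hN'
      · exact hcp3 e (by omega) (by omega) hcp
      · have := e'.isLt; omega
    apply Subtype.ext
    simp only [Prod.mk.injEq]
    exact ⟨Fin.ext hb', Fin.ext he'⟩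

lemma slice_coal (k : TempEl N K) (T : ℕ) : slice (coal k) T = slice k T := by
  by_cases hT : T < N
  · obtain ⟨I₀, ⟨hc, hcp⟩, huniq⟩ := exists_unique_cp k hT
    have key : slice (coal k) T = slice k (I₀.val.1 : ℕ) := by
      unfold slice coal
      rw [Finset.sum_ite, Finset.sum_const_zero, add_zero]
      have hsingle : (Finset.univ.filter (fun I : TInterval N => Contains I T)).filter
          (fun I => CPInterval k I) = {I₀} := by
        apply Finset.eq_singleton_iff_unique_mem.mpr
        constructor
        · simp only [Finset.mem_filter, Finset.mem_univ, true_and]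
          exact ⟨hc, hcp⟩
        · intro I hI
          simp only [Finset.mem_filter, Finset.mem_univ, true_and] at hI
          exact huniq I ⟨hI.1, hI.2⟩
      rw [hsingle, Finset.sum_singleton]
      rfl
    rw [key]
    exact slice_const k hc.1 (fun m hm hm' =>
      hcp.2.2 m hm (lt_of_le_of_lt hm' hc.2))
  · have hempty : ∀ 𝒯 : TempEl N K, slice 𝒯 T = 0 := by
      intro 𝒯
      unfold slice
      rw [Finset.filter_false_of_mem, Finset.sum_empty]
      intro I _ hcon
      have := I.val.2.isLt
      rcases hcon with ⟨h1, h2⟩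
      omega
    rw [hempty, hempty]

lemma coal_congr {𝒯 𝒯' : TempEl N K} (h : ∀ T, slice 𝒯 T = slice 𝒯' T) :
    coal 𝒯 = coal 𝒯' := by
  have hcp : Changepoint 𝒯 = Changepoint 𝒯' := by
    funext T; unfold Changepoint; rw [h, h]
  have hcpi : CPInterval 𝒯 = CPInterval 𝒯' := by
    funext I; unfold CPInterval; rw [hcp]
  funext I
  unfold coal
  rw [hcpi, h]

end Aux
end TemporalK

theorem coal_push_padd {N : ℕ} (hN : 1 ≤ N) {K : Type*} [CommSemiring K]
    (k k' : TempEl N K) :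
    coal (padd k k') = coal (padd (coal k) k') := by
  apply coal_congr
  intro T
  rw [slice_padd, slice_padd, slice_coal]
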